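/- arXiv:math/9201233 — 2 statements merged into one kernel-verified Lean document; each statement's English description precedes it below -/
import Mathlib

section
/- Let X be a Banach space that contains no isomorphic copy of ℓ₁. If (x*_n) is a sequence in X* such that (x*_n) converges to 0 in the weak* topology and such that ⟨x*_n, x_n⟩ → 0 for every weakly null sequence (x_n) in X, then ‖x*_n‖ → 0. -/
open Filter Topology Set

namespace RosAux

variable {σ : Type*}

/-- `x` is in `S n` for infinitely many `n ∈ N`. -/
def InfIn (x : σ) (S : ℕ → Set σ) (N : Set ℕ) : Prop := {n | n ∈ N ∧ x ∈ S n}.Infinite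

/-- Every infinite subset of `N` has a point of `S` that is infinitely often in `A`
and infinitely often in `B`. -/
def Active (A B : ℕ → Set σ) (N : Set ℕ) (S : Set σ) : Prop :=
  ∀ N' : Set ℕ, N' ⊆ N → N'.Infinite → ∃ x ∈ S, InfIn x A N' ∧ InfIn x B N'

lemma Active.mono_set {A B : ℕ → Set σ} {N : Set ℕ} {S S' : Set σ} (h : Active A B N S)
    (hss : S ⊆ S') : Active A B N S' := fun N' h1 h2 => by
  obtain ⟨x, hx, h3⟩ := h N' h1 h2
  exact ⟨x, hss hx, h3⟩

lemma Active.mono_idx {A B : ℕ → Set σ} {N N' : Set ℕ} {S : Set σ} (h : Active A B N S)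
    (hss : N' ⊆ N) : Active A B N' S := fun N'' h1 h2 => h N'' (h1.trans hss) h2

lemma Active.nonempty {A B : ℕ → Set σ} {N : Set ℕ} {S : Set σ} (h : Active A B N S)
    (hN : N.Infinite) : S.Nonempty := by
  obtain ⟨x, hx, -⟩ := h N subset_rfl hN
  exact ⟨x, hx⟩

lemma infinite_gt {N : Set ℕ} (hN : N.Infinite) (n : ℕ) : {m ∈ N | n < m}.Infinite := by
  refine (hN.diff (Set.finite_Iic n)).mono ?_
  intro m hm
  exact ⟨hm.1, by simpa using hm.2⟩

/-- The key one-step extension lemma. -/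
lemma step {ι : Type*} [Finite ι] {A B : ℕ → Set σ} {N : Set ℕ} (hN : N.Infinite)
    (𝒮 : ι → Set σ) (hact : ∀ i, Active A B N (𝒮 i)) :
    ∃ n ∈ N, ∃ N' : Set ℕ, N' ⊆ N ∧ N'.Infinite ∧ (∀ m ∈ N', n < m) ∧
      ∀ i, Active A B N' (𝒮 i ∩ A n) ∧ Active A B N' (𝒮 i ∩ B n) := by
  classical
  by_contra hcon
  have hι : Nonempty ι := by
    by_contra hni
    obtain ⟨m, hm⟩ := hN.nonempty
    exact hcon ⟨m, hm, {k ∈ N | m < k}, fun k hk => hk.1, infinite_gt hN m,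
      fun k hk => hk.2, fun i => (hni ⟨i⟩).elim⟩
  set C : Bool → ℕ → Set σ := fun c => bif c then A else B with hC
  -- every infinite subset of N admits a "failure witness"
  have key : ∀ s : {s : Set ℕ // s ⊆ N ∧ s.Infinite},
      ∃ (n : ℕ) (i : ι) (c : Bool) (t : {s : Set ℕ // s ⊆ N ∧ s.Infinite}),
        n ∈ s.1 ∧ t.1 ⊆ s.1 ∧ (∀ m ∈ t.1, n < m) ∧
        ∀ x, x ∈ 𝒮 i → x ∈ C c n → ¬(InfIn x A t.1 ∧ InfIn x B t.1) := by
    rintro ⟨N₀, hsub, hinf⟩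
    obtain ⟨n, hn⟩ := hinf.nonempty
    have hN₁inf : {m ∈ N₀ | n < m}.Infinite := infinite_gt hinf n
    have hN₁N : {m ∈ N₀ | n < m} ⊆ N := fun m hm => hsub hm.1
    have hfail : ∃ i, ¬(Active A B {m ∈ N₀ | n < m} (𝒮 i ∩ A n) ∧
        Active A B {m ∈ N₀ | n < m} (𝒮 i ∩ B n)) := by
      by_contra hall
      push_neg at hall
      exact hcon ⟨n, hsub hn, {m ∈ N₀ | n < m}, hN₁N, hN₁inf, fun m hm => hm.2, hall⟩
    obtain ⟨i, hi⟩ := hfail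
    have hcb : ∃ c : Bool, ¬ Active A B {m ∈ N₀ | n < m} (𝒮 i ∩ C c n) := by
      by_contra hc
      push_neg at hc
      exact hi ⟨hc true, hc false⟩
    obtain ⟨c, hcna⟩ := hcb
    rw [Active] at hcna
    push_neg at hcna
    obtain ⟨N'', hsub'', hinf'', hx⟩ := hcna
    refine ⟨n, i, c, ⟨N'', (hsub''.trans hN₁N), hinf''⟩, hn, hsub''.trans (fun m hm => hm.1),
      fun m hm => (hsub'' hm).2, fun x hx1 hx2 h12 => (hx x ⟨hx1, hx2⟩ h12.1) h12.2⟩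
  choose nf iif ccf tf hmem hsubf hltf hwit using key
  -- iterate
  set st : ℕ → {s : Set ℕ // s ⊆ N ∧ s.Infinite} :=
    fun k => Nat.rec ⟨N, subset_rfl, hN⟩ (fun _ s => tf s) k with hst
  have hstep : ∀ k, st (k + 1) = tf (st k) := fun k => rfl
  set n : ℕ → ℕ := fun k => nf (st k) with hn
  have hchain : ∀ j k, k ≤ j → (st j).1 ⊆ (st k).1 := by
    intro j
    induction j with
    | zero => intro k hk; rw [Nat.le_zero.mp hk]
    | succ j ih =>
      intro k hk
      rcases Nat.lt_or_ge k (j+1) with h | h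
      · exact (hsubf (st j)).trans (ih k (Nat.lt_succ_iff.mp h))
      · rw [le_antisymm hk h]
  have hnmem : ∀ k, n k ∈ (st k).1 := fun k => hmem (st k)
  have hlt : ∀ k, ∀ m ∈ (st (k+1)).1, n k < m := fun k => hltf (st k)
  have hmono : StrictMono n := by
    apply strictMono_nat_of_lt_succ
    intro k
    exact hlt k _ (hnmem (k+1))
  obtain ⟨p, hp⟩ := Finite.exists_infinite_fiber (fun k => (iif (st k), ccf (st k)))
  set K := (fun k => (iif (st k), ccf (st k))) ⁻¹' {p} with hK
  have hKinf : K.Infinite := Set.infinite_coe_iff.mp hp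
  have hDinf : (n '' K).Infinite := hKinf.image (hmono.injective.injOn)
  have hDsub : n '' K ⊆ N := by
    rintro - ⟨k, -, rfl⟩
    exact (st k).2.1 (hnmem k)
  obtain ⟨x, hxS, hxa, hxb⟩ := hact p.1 (n '' K) hDsub hDinf
  -- find k ∈ K with x ∈ C p.2 (n k)
  have hone : ∃ k ∈ K, x ∈ C p.2 (n k) := by
    rcases Bool.dichotomy p.2 with h2 | h2 <;> rw [h2]
    · obtain ⟨m, hm⟩ := hxb.nonempty
      obtain ⟨k, hk, rfl⟩ := hm.1
      exact ⟨k, hk, by simpa [hC] using hm.2⟩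
    · obtain ⟨m, hm⟩ := hxa.nonempty
      obtain ⟨k, hk, rfl⟩ := hm.1
      exact ⟨k, hk, by simpa [hC] using hm.2⟩
  obtain ⟨k, hkK, hxC⟩ := hone
  have hik : iif (st k) = p.1 := congrArg Prod.fst hkK
  have hck : ccf (st k) = p.2 := congrArg Prod.snd hkK
  -- x is infinitely often in A and in B along st (k+1)
  have hsubtail : ∀ S : ℕ → Set σ, {m | m ∈ n '' K ∧ x ∈ S m}.Infinite →
      {m | m ∈ (st (k+1)).1 ∧ x ∈ S m}.Infinite := by
    intro S hS
    refine (hS.diff (Set.finite_Iic (n k))).mono ?_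
    rintro m ⟨⟨⟨k', -, rfl⟩, hxm⟩, hgt⟩
    simp only [Set.mem_Iic, not_le] at hgt
    have hk' : k < k' := by
      by_contra hle
      exact absurd (hmono.le_iff_le.mpr (not_lt.mp hle)) (not_le.mpr hgt)
    exact ⟨hchain k' (k+1) hk' (hnmem k'), hxm⟩
  have := hwit (st k) x (by rw [hik]; exact hxS) (by rw [hck]; exact hxC)
  rw [← hstep] at this
  exact this ⟨hsubtail A hxa, hsubtail B hxb⟩

end RosAux

namespace RosAux2
open RosAux

variable {σ : Type*}

lemma biInter_range_eq (k : ℕ) (f : ℕ → Set σ) :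
    ⋂ j ∈ Finset.range k, f j = ⋂ j : Fin k, f j.1 := by
  ext x
  simp [Finset.mem_range, Fin.forall_iff]

lemma biInter_congr {k : ℕ} {f g : ℕ → Set σ} (h : ∀ j < k, f j = g j) :
    ⋂ j ∈ Finset.range k, f j = ⋂ j ∈ Finset.range k, g j := by
  ext x
  simp only [Set.mem_iInter, Finset.mem_range]
  exact ⟨fun H j hj => by rw [← h j hj]; exact H j hj,
         fun H j hj => by rw [h j hj]; exact H j hj⟩

lemma exists_independent {A B : ℕ → Set σ} {N : Set ℕ} (hN : N.Infinite)
    (hact : Active A B N univ) :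
    ∃ m : ℕ → ℕ, StrictMono m ∧ ∀ F G : Finset ℕ, Disjoint F G →
      ((⋂ j ∈ F, A (m j)) ∩ ⋂ j ∈ G, B (m j)).Nonempty := by
  classical
  set Cb : Bool → ℕ → Set σ := fun c => bif c then A else B with hCb
  set Inv : ℕ → (ℕ → ℕ) × Set ℕ → Prop := fun k q =>
    q.2.Infinite ∧ q.2 ⊆ N ∧ (∀ j < k, ∀ p ∈ q.2, q.1 j < p) ∧
    (∀ i j, i < j → j < k → q.1 i < q.1 j) ∧
    (∀ s : ℕ → Bool, Active A B q.2 (⋂ j ∈ Finset.range k, Cb (s j) (q.1 j))) with hInv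
  have kstep : ∀ (k : ℕ) (q : (ℕ → ℕ) × Set ℕ), Inv k q →
      ∃ q', Inv (k+1) q' ∧ ∀ j < k, q'.1 j = q.1 j := by
    rintro k ⟨m, N'⟩ ⟨h1, h2, h3, h4, h5⟩
    obtain ⟨n, hnN', N'', hsub, hinf, hgt, hAB⟩ :=
      RosAux.step (ι := Fin k → Bool) h1
        (fun t => ⋂ j : Fin k, Cb (t j) (m j.1))
        (by
          intro t
          have := h5 (fun j => if h : j < k then t ⟨j, h⟩ else true)
          rwa [biInter_range_eq, iInter_congr (fun j => by rw [dif_pos j.2])] at this)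
    refine ⟨(Function.update m k n, N''), ⟨hinf, hsub.trans h2, ?_, ?_, ?_⟩, ?_⟩
    · intro j hj p hp
      show Function.update m k n j < p
      simp only [Prod.snd] at hp
      rcases Nat.lt_or_ge j k with h | h
      · rw [Function.update_of_ne (Nat.ne_of_lt h)]
        exact h3 j h p (hsub hp)
      · have : j = k := le_antisymm (Nat.lt_succ_iff.mp hj) h
        rw [this, Function.update_self]
        exact hgt p hp
    · intro i j hij hjk
      show Function.update m k n i < Function.update m k n j
      rcases Nat.lt_or_ge j k with h | h
      · rw [Function.update_of_ne (Nat.ne_of_lt (hij.trans h)),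
          Function.update_of_ne (Nat.ne_of_lt h)]
        exact h4 i j hij h
      · have hj : j = k := le_antisymm (Nat.lt_succ_iff.mp hjk) h
        subst hj
        rw [Function.update_of_ne (Nat.ne_of_lt hij), Function.update_self]
        exact h3 i hij n hnN'
    · intro s
      show Active A B N'' (⋂ j ∈ Finset.range (k+1), Cb (s j) (Function.update m k n j))
      have heq : ⋂ j ∈ Finset.range (k+1), Cb (s j) (Function.update m k n j) =
          (⋂ j : Fin k, Cb ((fun j : Fin k => s j.1) j) (m j.1)) ∩ Cb (s k) n := by
        rw [Finset.range_add_one, Finset.set_biInter_insert,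
          biInter_congr (f := fun j => Cb (s j) (Function.update m k n j))
            (g := fun j => Cb (s j) (m j))
            (fun j hj => by
              show Cb (s j) (Function.update m k n j) = Cb (s j) (m j)
              rw [Function.update_of_ne (Nat.ne_of_lt hj)]),
          Function.update_self, biInter_range_eq, Set.inter_comm]
      rw [heq]
      rcases Bool.dichotomy (s k) with h | h <;> rw [h]
      · simpa [hCb] using (hAB (fun j : Fin k => s j.1)).2
      · simpa [hCb] using (hAB (fun j : Fin k => s j.1)).1
    · intro j hj
      show Function.update m k n j = m j
      exact Function.update_of_ne (Nat.ne_of_lt hj) n m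
  choose! Fst hF1 hF2 using kstep
  have base : Inv 0 ((fun _ => 0), N) := by
    refine ⟨hN, subset_rfl, fun j hj => absurd hj (Nat.not_lt_zero j),
      fun i j _ hj => absurd hj (Nat.not_lt_zero j), fun s => ?_⟩
    have : ⋂ j ∈ Finset.range 0, Cb (s j) 0 = (univ : Set σ) := by simp
    rw [this]
    exact hact
  set seq : ∀ k : ℕ, {q : (ℕ → ℕ) × Set ℕ // Inv k q} :=
    fun k => Nat.rec ⟨((fun _ => 0), N), base⟩ (fun k s => ⟨Fst k s.1, hF1 k s.1 s.2⟩) k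
    with hseq
  set mfin : ℕ → ℕ := fun j => (seq (j+1)).1.1 j with hmfin
  have hcoh : ∀ k j, j < k → (seq k).1.1 j = mfin j := by
    intro k
    induction k with
    | zero => intro j hj; exact absurd hj (Nat.not_lt_zero j)
    | succ k ih =>
      intro j hj
      rcases Nat.lt_or_ge j k with h | h
      · have : (seq (k+1)).1.1 j = (seq k).1.1 j := hF2 k (seq k).1 (seq k).2 j h
        rw [this, ih j h]
      · rw [le_antisymm (Nat.lt_succ_iff.mp hj) h]
  have hmono : StrictMono mfin := by
    apply strictMono_nat_of_lt_succ
    intro j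
    have := ((seq (j+2)).2).2.2.2.1 j (j+1) (Nat.lt_succ_self j) (Nat.lt_succ_self (j+1))
    rwa [hcoh (j+2) j (by omega), hcoh (j+2) (j+1) (by omega)] at this
  refine ⟨mfin, hmono, ?_⟩
  intro F G hdis
  set k : ℕ := (F ∪ G).sup id + 1 with hk
  have hjk : ∀ j ∈ F ∪ G, j < k := fun j hj =>
    Nat.lt_succ_of_le (Finset.le_sup (f := id) hj)
  obtain ⟨x, hx⟩ := (((seq k).2).2.2.2.2 (fun j => decide (j ∈ F))).nonempty ((seq k).2).1
  have hx' : ∀ j ∈ Finset.range k, x ∈ Cb (decide (j ∈ F)) ((seq k).1.1 j) :=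
    Set.mem_iInter₂.mp hx
  refine ⟨x, Set.mem_inter (Set.mem_iInter₂.mpr fun j hjF => ?_)
    (Set.mem_iInter₂.mpr fun j hjG => ?_)⟩
  · 
    have hjlt : j < k := hjk j (Finset.mem_union_left G hjF)
    have := hx' j (Finset.mem_range.mpr hjlt)
    rw [decide_eq_true hjF, hcoh k j hjlt] at this
    simpa [hCb] using this
  · have hjlt : j < k := hjk j (Finset.mem_union_right F hjG)
    have := hx' j (Finset.mem_range.mpr hjlt)
    have hnF : j ∉ F := Finset.disjoint_right.mp hdis hjG
    rw [decide_eq_false hnF, hcoh k j hjlt] at this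
    simpa [hCb] using this

end RosAux2

namespace RosAux3
open RosAux RosAux2

variable {σ : Type*}

lemma infinite_lt_of_subseq {w : ℕ → ℝ} {ψ : ℕ → ℕ} (hψ : StrictMono ψ) {L q : ℝ}
    (h : Tendsto (fun j => w (ψ j)) atTop (𝓝 L)) (hLq : L < q) : {j | w j < q}.Infinite := by
  have hev : ∀ᶠ j in atTop, w (ψ j) < q := h.eventually (Filter.Tendsto.eventually_lt_const hLq tendsto_id)
  obtain ⟨M, hM⟩ := eventually_atTop.mp hev
  refine Set.infinite_of_injective_forall_mem
    (f := fun j : ℕ => ψ (j + M)) (fun a b hab => ?_) (fun a => hM (a + M) (Nat.le_add_left M a))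
  have := hψ.injective hab
  omega

lemma dichotomy (v : ℕ → σ → ℝ) (hb : ∀ n x, |v n x| ≤ 1)
    (hnc : ∀ φ : ℕ → ℕ, StrictMono φ →
      ∃ x, ¬ ∃ L, Tendsto (fun j => v (φ j) x) atTop (𝓝 L)) :
    ∃ q r : ℝ, q < r ∧ ∃ N : Set ℕ, N.Infinite ∧
      Active (fun n => {x | v n x < q}) (fun n => {x | r < v n x}) N univ := by
  classical
  by_contra hcon
  push_neg at hcon
  -- for every rational pair and infinite N, there is an infinite "convergent" subset
  have key : ∀ (q r : ℚ) (N : Set ℕ), N.Infinite → ∃ N' : Set ℕ, N' ⊆ N ∧ N'.Infinite ∧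
      ((q : ℝ) < r → ∀ x : σ, ¬(InfIn x (fun n => {x | v n x < (q : ℝ)}) N' ∧
        InfIn x (fun n => {x | (r : ℝ) < v n x}) N')) := by
    intro q r N hN
    rcases lt_or_ge (q : ℝ) (r : ℝ) with hqr | hqr
    · have hna := hcon q r hqr N hN
      rw [Active] at hna
      push_neg at hna
      obtain ⟨N', h1, h2, h3⟩ := hna
      refine ⟨N', h1, h2, fun _ x hx => ?_⟩
      exact (h3 x (Set.mem_univ x) hx.1) hx.2
    · exact ⟨N, subset_rfl, hN, fun h => absurd h (not_lt.mpr hqr)⟩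
  set e : ℕ → ℚ × ℚ := fun n => (Denumerable.eqv (ℚ × ℚ)).symm n with he
  have hesurj : Function.Surjective e := (Denumerable.eqv (ℚ × ℚ)).symm.surjective
  -- decreasing chain of infinite sets
  have step : ∀ (i : ℕ) (s : {s : Set ℕ // s.Infinite}),
      ∃ t : {s : Set ℕ // s.Infinite}, t.1 ⊆ s.1 ∧
        (((e i).1 : ℝ) < (e i).2 → ∀ x : σ,
          ¬(InfIn x (fun n => {x | v n x < ((e i).1 : ℝ)}) t.1 ∧
            InfIn x (fun n => {x | ((e i).2 : ℝ) < v n x}) t.1)) := by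
    rintro i ⟨s, hs⟩
    obtain ⟨N', h1, h2, h3⟩ := key (e i).1 (e i).2 s hs
    exact ⟨⟨N', h2⟩, h1, h3⟩
  choose stf hsub hconv using step
  set Ns : ℕ → {s : Set ℕ // s.Infinite} :=
    fun i => Nat.rec ⟨Set.univ, Set.infinite_univ⟩ (fun i s => stf i s) i with hNs
  have hstep : ∀ i, Ns (i+1) = stf i (Ns i) := fun i => rfl
  have hchain : ∀ j i, i ≤ j → (Ns j).1 ⊆ (Ns i).1 := by
    intro j
    induction j with
    | zero => intro i hi; rw [Nat.le_zero.mp hi]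
    | succ j ih =>
      intro i hi
      rcases Nat.lt_or_ge i (j+1) with h | h
      · exact (hsub j (Ns j)).trans (ih i (Nat.lt_succ_iff.mp h))
      · rw [le_antisymm hi h]
  -- diagonal sequence
  have dstep : ∀ (i : ℕ) (n : ℕ), ∃ m, m ∈ (Ns (i+1)).1 ∧ n < m :=
    fun i n => (Ns (i+1)).2.exists_gt n
  choose df hdmem hdlt using dstep
  set d : ℕ → ℕ := fun i => Nat.rec (Classical.choose (Ns 0).2.nonempty) (fun i n => df i n) i
    with hd
  have hdmem' : ∀ i, d i ∈ (Ns i).1 := by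
    intro i
    cases i with
    | zero => exact Classical.choose_spec (Ns 0).2.nonempty
    | succ i => exact hdmem i (d i)
  have hdmono : StrictMono d := strictMono_nat_of_lt_succ (fun i => hdlt i (d i))
  have hdgen : ∀ i j, i ≤ j → d j ∈ (Ns i).1 := fun i j hij => hchain j i hij (hdmem' j)
  -- the diagonal subsequence has a non-convergent evaluation
  obtain ⟨x, hx⟩ := hnc d hdmono
  set w : ℕ → ℝ := fun j => v (d j) x with hw
  -- find two subsequential limits a < b of w
  obtain ⟨a, -, φ₁, hφ₁, ha⟩ := tendsto_subseq_of_bounded (Metric.isBounded_Icc (-1 : ℝ) 1)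
    (fun j => Set.mem_Icc.mpr (abs_le.mp (hb (d j) x)))
  have hnt : ¬ Tendsto w atTop (𝓝 a) := fun h => hx ⟨a, h⟩
  rw [Metric.tendsto_atTop] at hnt
  push_neg at hnt
  obtain ⟨ε, hε, hfreq⟩ := hnt
  obtain ⟨φ₂, hφ₂, hφ₂'⟩ := extraction_of_frequently_atTop
    (frequently_atTop.mpr (fun N => by obtain ⟨n, hn1, hn2⟩ := hfreq N; exact ⟨n, hn1, hn2⟩))
  obtain ⟨b, -, φ₃, hφ₃, hbb⟩ := tendsto_subseq_of_bounded (Metric.isBounded_Icc (-1 : ℝ) 1)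
    (fun j => Set.mem_Icc.mpr (abs_le.mp (hb (d (φ₂ j)) x)))
  have hab : a ≠ b := by
    intro h
    have hdist : Tendsto (fun j => dist (w (φ₂ (φ₃ j))) a) atTop (𝓝 (dist b a)) :=
      hbb.dist tendsto_const_nhds
    have : ε ≤ dist b a := ge_of_tendsto' hdist (fun j => hφ₂' (φ₃ j))
    rw [← h, dist_self] at this
    linarith
  -- get strictly monotone subsequences tending to lo < hi
  obtain ⟨lo, hi, ψlo, ψhi, hψlo, hψhi, hlo, hhi, hlohi⟩ :
      ∃ (lo hi : ℝ) (ψlo ψhi : ℕ → ℕ), StrictMono ψlo ∧ StrictMono ψhi ∧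
        Tendsto (fun j => w (ψlo j)) atTop (𝓝 lo) ∧
        Tendsto (fun j => w (ψhi j)) atTop (𝓝 hi) ∧ lo < hi := by
    rcases lt_or_gt_of_ne hab with h | h
    · exact ⟨a, b, φ₁, φ₂ ∘ φ₃, hφ₁, hφ₂.comp hφ₃, ha, hbb, h⟩
    · exact ⟨b, a, φ₂ ∘ φ₃, φ₁, hφ₂.comp hφ₃, hφ₁, hbb, ha, h⟩
  obtain ⟨q, hq1, hq2⟩ := exists_rat_btwn hlohi
  obtain ⟨r, hr1, hr2⟩ := exists_rat_btwn hq2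
  obtain ⟨i, hi⟩ := hesurj (q, r)
  have hiq : ((e i).1 : ℝ) = (q : ℝ) := by rw [hi]
  have hir : ((e i).2 : ℝ) = (r : ℝ) := by rw [hi]
  have hqr : ((e i).1 : ℝ) < (e i).2 := by rw [hiq, hir]; exact_mod_cast hr1
  -- x is infinitely often small and infinitely often large along Ns (i+1)
  have hinflt : {j | w j < (q : ℝ)}.Infinite := infinite_lt_of_subseq hψlo hlo hq1
  have hinfgt : {j | (r : ℝ) < w j}.Infinite := by
    have := infinite_lt_of_subseq (w := fun j => -w j) hψhi (hhi.neg) (neg_lt_neg hr2)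
    refine this.mono ?_
    intro j hj
    simpa using hj
  have hIa : InfIn x (fun n => {y | v n y < ((e i).1 : ℝ)}) (Ns (i+1)).1 := by
    refine ((hinflt.diff (Set.finite_Iic i)).image (hdmono.injective.injOn)).mono ?_
    rintro - ⟨j, ⟨hjlt, hjgt⟩, rfl⟩
    simp only [Set.mem_Iic, not_le] at hjgt
    exact ⟨hdgen (i+1) j hjgt, by rw [hiq]; exact hjlt⟩
  have hIb : InfIn x (fun n => {y | ((e i).2 : ℝ) < v n y}) (Ns (i+1)).1 := by
    refine ((hinfgt.diff (Set.finite_Iic i)).image (hdmono.injective.injOn)).mono ?_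
    rintro - ⟨j, ⟨hjlt, hjgt⟩, rfl⟩
    simp only [Set.mem_Iic, not_le] at hjgt
    exact ⟨hdgen (i+1) j hjgt, by rw [hir]; exact hjlt⟩
  rw [hstep i] at hIa hIb
  exact hconv i (Ns i) hqr x ⟨hIa, hIb⟩

end RosAux3

namespace RosMain
open RosAux RosAux2 RosAux3

variable {X : Type*} [NormedAddCommGroup X] [NormedSpace ℝ X] [CompleteSpace X]

lemma norm_lp_one (a : lp (fun _ : ℕ => ℝ) 1) : ‖a‖ = ∑' j, ‖(a : ∀ _ : ℕ, ℝ) j‖ := by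
  have := lp.norm_eq_tsum_rpow (p := 1) (by norm_num) a
  simpa using this

lemma summable_norm_lp_one (a : lp (fun _ : ℕ => ℝ) 1) :
    Summable (fun j => ‖(a : ∀ _ : ℕ, ℝ) j‖) := by
  have := (lp.memℓp a).summable (p := 1) (by norm_num)
  simpa using this

set_option maxHeartbeats 2000000 in
/-- Rosenthal's ℓ₁-theorem, the direction we need: in a Banach space with no copy of ℓ₁,
every sequence in the unit ball has a weakly Cauchy subsequence. -/
lemma exists_weakly_cauchy_subseq
    (hX : ¬ ∃ (J : lp (fun _ : ℕ => ℝ) 1 →L[ℝ] X) (c : ℝ),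
        0 < c ∧ ∀ a : lp (fun _ : ℕ => ℝ) 1, c * ‖a‖ ≤ ‖J a‖)
    (u : ℕ → X) (hu : ∀ k, ‖u k‖ ≤ 1) :
    ∃ φ : ℕ → ℕ, StrictMono φ ∧
      ∀ f : X →L[ℝ] ℝ, ∃ L, Tendsto (fun j => f (u (φ j))) atTop (𝓝 L) := by
  classical
  by_contra hcon
  -- no subsequence is weakly Cauchy; move to the dual unit ball
  have hnc : ∀ φ : ℕ → ℕ, StrictMono φ → ∃ x : {g : X →L[ℝ] ℝ // ‖g‖ ≤ 1},
      ¬ ∃ L, Tendsto (fun j => (x.1 : X →L[ℝ] ℝ) (u (φ j))) atTop (𝓝 L) := by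
    intro φ hφ
    have hEx : ∃ f : X →L[ℝ] ℝ, ¬ ∃ L, Tendsto (fun j => f (u (φ j))) atTop (𝓝 L) := by
      by_contra hall
      push_neg at hall
      exact hcon ⟨φ, hφ, hall⟩
    obtain ⟨f, hf⟩ := hEx
    have hf0 : f ≠ 0 := by
      rintro rfl
      exact hf ⟨0, by simpa using (tendsto_const_nhds : Tendsto (fun _ : ℕ => (0:ℝ)) atTop _)⟩
    refine ⟨⟨‖f‖⁻¹ • f, ?_⟩, ?_⟩
    · have : ‖(‖f‖⁻¹ • f : X →L[ℝ] ℝ)‖ = ‖f‖⁻¹ * ‖f‖ := by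
        rw [norm_smul (‖f‖⁻¹) f, norm_inv, norm_norm]
      rw [this, inv_mul_cancel₀ (norm_ne_zero_iff.mpr hf0)]
    · rintro ⟨L, hL⟩
      refine hf ⟨‖f‖ * L, ?_⟩
      have h2 := hL.const_mul ‖f‖
      have : (fun j => ‖f‖ * ((‖f‖⁻¹ • f) (u (φ j)))) = fun j => f (u (φ j)) := by
        funext j
        rw [ContinuousLinearMap.smul_apply, smul_eq_mul, ← mul_assoc,
          mul_inv_cancel₀ (norm_ne_zero_iff.mpr hf0), one_mul]
      rwa [this] at h2
  obtain ⟨q, r, hqr, N, hN, hact⟩ := dichotomy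
    (v := fun n (x : {g : X →L[ℝ] ℝ // ‖g‖ ≤ 1}) => x.1 (u n))
    (fun n x => by
      calc |x.1 (u n)| ≤ ‖x.1‖ * ‖u n‖ := x.1.le_opNorm (u n)
      _ ≤ 1 * 1 := mul_le_mul x.2 (hu n) (norm_nonneg _) zero_le_one
      _ = 1 := one_mul 1)
    hnc
  obtain ⟨m, hm, hFG⟩ := exists_independent hN hact
  -- build the ℓ₁-embedding
  have hsum : ∀ a : lp (fun _ : ℕ => ℝ) 1,
      Summable (fun j => (a : ∀ _ : ℕ, ℝ) j • u (m j)) := by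
    intro a
    refine Summable.of_norm_bounded (summable_norm_lp_one a) (fun j => ?_)
    rw [norm_smul]
    calc ‖(a : ∀ _ : ℕ, ℝ) j‖ * ‖u (m j)‖ ≤ ‖(a : ∀ _ : ℕ, ℝ) j‖ * 1 :=
          mul_le_mul_of_nonneg_left (hu (m j)) (norm_nonneg _)
      _ = _ := mul_one _
  set Jlin : lp (fun _ : ℕ => ℝ) 1 →ₗ[ℝ] X :=
    { toFun := fun a => ∑' j, (a : ∀ _ : ℕ, ℝ) j • u (m j)
      map_add' := by
        intro a b
        show (∑' j, ((a + b : lp (fun _ : ℕ => ℝ) 1) : ∀ _ : ℕ, ℝ) j • u (m j)) =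
          (∑' j, (a : ∀ _ : ℕ, ℝ) j • u (m j)) + ∑' j, (b : ∀ _ : ℕ, ℝ) j • u (m j)
        have : (fun j => ((a + b : lp (fun _ : ℕ => ℝ) 1) : ∀ _ : ℕ, ℝ) j • u (m j)) =
            fun j => (a : ∀ _ : ℕ, ℝ) j • u (m j) + (b : ∀ _ : ℕ, ℝ) j • u (m j) := by
          funext j
          rw [lp.coeFn_add, Pi.add_apply, add_smul]
        rw [this, Summable.tsum_add (hsum a) (hsum b)]
      map_smul' := by
        intro c a
        show (∑' j, ((c • a : lp (fun _ : ℕ => ℝ) 1) : ∀ _ : ℕ, ℝ) j • u (m j)) =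
          c • ∑' j, (a : ∀ _ : ℕ, ℝ) j • u (m j)
        have : (fun j => ((c • a : lp (fun _ : ℕ => ℝ) 1) : ∀ _ : ℕ, ℝ) j • u (m j)) =
            fun j => c • ((a : ∀ _ : ℕ, ℝ) j • u (m j)) := by
          funext j
          rw [lp.coeFn_smul, Pi.smul_apply, smul_smul, smul_eq_mul]
        rw [this, Summable.tsum_const_smul c (hsum a)] } with hJlin
  have hJbound : ∀ a : lp (fun _ : ℕ => ℝ) 1, ‖Jlin a‖ ≤ 1 * ‖a‖ := by
    intro a
    rw [one_mul, norm_lp_one]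
    calc ‖Jlin a‖ ≤ ∑' j, ‖(a : ∀ _ : ℕ, ℝ) j • u (m j)‖ :=
          norm_tsum_le_tsum_norm (by
            refine Summable.of_nonneg_of_le (fun j => norm_nonneg _) (fun j => ?_)
              (summable_norm_lp_one a)
            rw [norm_smul]
            exact mul_le_mul_of_nonneg_left (hu (m j)) (norm_nonneg _) |>.trans
              (le_of_eq (mul_one _)))
      _ ≤ ∑' j, ‖(a : ∀ _ : ℕ, ℝ) j‖ := by
          refine Summable.tsum_le_tsum (fun j => ?_) ?_ (summable_norm_lp_one a)
          · rw [norm_smul]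
            exact (mul_le_mul_of_nonneg_left (hu (m j)) (norm_nonneg _)).trans
              (le_of_eq (mul_one _))
          · refine Summable.of_nonneg_of_le (fun j => norm_nonneg _) (fun j => ?_)
              (summable_norm_lp_one a)
            rw [norm_smul]
            exact (mul_le_mul_of_nonneg_left (hu (m j)) (norm_nonneg _)).trans
              (le_of_eq (mul_one _))
  set J : lp (fun _ : ℕ => ℝ) 1 →L[ℝ] X := Jlin.mkContinuous 1 hJbound with hJ
  refine hX ⟨J, (r - q)/2, by linarith, ?_⟩
  intro a
  -- the lower bound
  set av : ∀ _ : ℕ, ℝ := (a : ∀ _ : ℕ, ℝ) with hav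
  have hJa : J a = ∑' j, av j • u (m j) := LinearMap.mkContinuous_apply Jlin 1 hJbound a
  have key : ∀ K : ℕ, (r - q) * (∑ j ∈ Finset.range K, ‖av j‖)
      - 2 * (∑' i, ‖av (i + K)‖) ≤ 2 * ‖J a‖ := by
    intro K
    set F : Finset ℕ := (Finset.range K).filter (fun j => 0 ≤ av j) with hF
    set G : Finset ℕ := (Finset.range K).filter (fun j => ¬ 0 ≤ av j) with hG
    have hdisj : Disjoint F G := Finset.disjoint_filter_filter_not _ _ _
    obtain ⟨y, hy⟩ := hFG F G hdisj
    obtain ⟨x, hx⟩ := hFG G F hdisj.symm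
    have hyF : ∀ j ∈ F, y.1 (u (m j)) < q := fun j hj =>
      (Set.mem_iInter₂.mp hy.1 j hj : _)
    have hyG : ∀ j ∈ G, r < y.1 (u (m j)) := fun j hj =>
      (Set.mem_iInter₂.mp hy.2 j hj : _)
    have hxG : ∀ j ∈ G, x.1 (u (m j)) < q := fun j hj =>
      (Set.mem_iInter₂.mp hx.1 j hj : _)
    have hxF : ∀ j ∈ F, r < x.1 (u (m j)) := fun j hj =>
      (Set.mem_iInter₂.mp hx.2 j hj : _)
    set h : X →L[ℝ] ℝ := x.1 - y.1 with hh
    have hhn : ‖h‖ ≤ 2 := by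
      calc ‖x.1 - y.1‖ ≤ ‖x.1‖ + ‖y.1‖ := norm_sub_le _ _
        _ ≤ 1 + 1 := add_le_add x.2 y.2
        _ = 2 := by norm_num
    set t : ℕ → ℝ := fun j => av j * h (u (m j)) with ht
    have htb : ∀ j, ‖t j‖ ≤ ‖av j‖ * 2 := by
      intro j
      rw [ht]
      calc ‖av j * h (u (m j))‖ = ‖av j‖ * ‖h (u (m j))‖ := norm_mul _ _
        _ ≤ ‖av j‖ * (‖h‖ * ‖u (m j)‖) :=
            mul_le_mul_of_nonneg_left (h.le_opNorm _) (norm_nonneg _)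
        _ ≤ ‖av j‖ * (2 * 1) := by
            refine mul_le_mul_of_nonneg_left ?_ (norm_nonneg _)
            exact mul_le_mul hhn (hu (m j)) (norm_nonneg _) (by norm_num)
        _ = ‖av j‖ * 2 := by ring
    have hts : Summable t := by
      refine Summable.of_norm_bounded ((summable_norm_lp_one a).mul_right 2) htb
    have htsum : h (J a) = ∑' j, t j := by
      rw [hJa, ContinuousLinearMap.map_tsum _ (hsum a)]
      congr 1
      funext j
      rw [ht, map_smul, smul_eq_mul]
    have hsplit : (∑ j ∈ Finset.range K, t j) + (∑' i, t (i + K)) = ∑' j, t j :=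
      Summable.sum_add_tsum_nat_add K hts
    -- estimate head
    have hhead : (r - q) * (∑ j ∈ Finset.range K, ‖av j‖) ≤ ∑ j ∈ Finset.range K, t j := by
      rw [Finset.mul_sum]
      refine Finset.sum_le_sum (fun j hj => ?_)
      rcases le_or_gt 0 (av j) with hpos | hneg
      · have hjF : j ∈ F := Finset.mem_filter.mpr ⟨hj, hpos⟩
        have h1 : r - q < h (u (m j)) := by
          have h2 := hxF j hjF
          have h3 := hyF j hjF
          have h4 : h (u (m j)) = x.1 (u (m j)) - y.1 (u (m j)) :=
            ContinuousLinearMap.sub_apply x.1 y.1 (u (m j))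
          rw [h4]; linarith
        have h5 : t j = av j * h (u (m j)) := rfl
        rw [h5, Real.norm_eq_abs, abs_of_nonneg hpos]
        have hcore : ∀ c d : ℝ, 0 ≤ c → r - q < d → (r - q) * c ≤ c * d := by
          intro c d hc hd
          nlinarith
        exact hcore (av j) (h (u (m j))) hpos h1
      · have hjG : j ∈ G := Finset.mem_filter.mpr ⟨hj, not_le.mpr hneg⟩
        have h1 : h (u (m j)) < -(r - q) := by
          have h2 := hxG j hjG
          have h3 := hyG j hjG
          have h4 : h (u (m j)) = x.1 (u (m j)) - y.1 (u (m j)) :=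
            ContinuousLinearMap.sub_apply x.1 y.1 (u (m j))
          rw [h4]; linarith
        have h5 : t j = av j * h (u (m j)) := rfl
        rw [h5, Real.norm_eq_abs, abs_of_neg hneg]
        have hcore : ∀ c d : ℝ, c < 0 → d < -(r - q) → (r - q) * -c ≤ c * d := by
          intro c d hc hd
          nlinarith
        exact hcore (av j) (h (u (m j))) hneg h1
    -- estimate tail
    have htail : -(2 * ∑' i, ‖av (i + K)‖) ≤ ∑' i, t (i + K) := by
      have hs1 : Summable (fun i => ‖t (i + K)‖) := (summable_nat_add_iff K).2 hts.norm
      have hs2 : Summable (fun i => ‖av (i + K)‖ * 2) :=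
        (summable_nat_add_iff K).2 ((summable_norm_lp_one a).mul_right 2)
      have h1 : ‖∑' i, t (i + K)‖ ≤ ∑' i, ‖av (i + K)‖ * 2 := by
        calc ‖∑' i, t (i + K)‖ ≤ ∑' i, ‖t (i + K)‖ := norm_tsum_le_tsum_norm hs1
          _ ≤ ∑' i, ‖av (i + K)‖ * 2 := Summable.tsum_le_tsum (fun i => htb (i + K)) hs1 hs2
      rw [tsum_mul_right] at h1
      have := neg_le_of_abs_le (h1.trans (le_of_eq (mul_comm _ 2)))
      linarith [this]
    have hfinal : h (J a) ≤ 2 * ‖J a‖ := by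
      calc h (J a) ≤ ‖h (J a)‖ := le_abs_self _
        _ ≤ ‖h‖ * ‖J a‖ := h.le_opNorm _
        _ ≤ 2 * ‖J a‖ := mul_le_mul_of_nonneg_right hhn (norm_nonneg _)
    rw [htsum, ← hsplit] at hfinal
    linarith [hhead, htail, hfinal]
  -- pass to the limit K → ∞
  have hlim1 : Tendsto (fun K => ∑ j ∈ Finset.range K, ‖av j‖) atTop
      (𝓝 (∑' j, ‖av j‖)) := (summable_norm_lp_one a).hasSum.tendsto_sum_nat
  have hlim2 : Tendsto (fun K => ∑' i, ‖av (i + K)‖) atTop (𝓝 0) :=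
    tendsto_sum_nat_add (fun j => ‖av j‖)
  have hlim : Tendsto (fun K => (r - q) * (∑ j ∈ Finset.range K, ‖av j‖)
      - 2 * (∑' i, ‖av (i + K)‖)) atTop (𝓝 ((r - q) * (∑' j, ‖av j‖) - 2 * 0)) :=
    ((hlim1.const_mul (r - q)).sub (hlim2.const_mul 2))
  have hle : (r - q) * (∑' j, ‖av j‖) - 2 * 0 ≤ 2 * ‖J a‖ :=
    le_of_tendsto hlim (Filter.Eventually.of_forall key)
  rw [norm_lp_one]
  rw [mul_zero, sub_zero] at hle
  linarith

lemma exists_big (f : X →L[ℝ] ℝ) {ε : ℝ} (hε : 0 < ε) (hf : ε ≤ ‖f‖) :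
    ∃ u : X, ‖u‖ ≤ 1 ∧ ε/2 < f u := by
  by_contra hcon
  push_neg at hcon
  have habs : ∀ u : X, ‖u‖ ≤ 1 → |f u| ≤ ε/2 := by
    intro u hu
    rcases abs_cases (f u) with ⟨h, -⟩ | ⟨h, -⟩
    · rw [h]; exact hcon u hu
    · rw [h]
      have := hcon (-u) (by rwa [norm_neg])
      rw [map_neg] at this
      linarith
  have hb : ‖f‖ ≤ ε/2 := by
    refine f.opNorm_le_bound (by linarith) (fun x => ?_)
    rcases eq_or_ne x 0 with rfl | hx
    · simp
    · have hnx : 0 < ‖x‖ := norm_pos_iff.mpr hx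
      have h1 : ‖(‖x‖⁻¹ • x : X)‖ ≤ 1 := by
        rw [norm_smul, norm_inv, norm_norm, inv_mul_cancel₀ hnx.ne']
      have h2 := habs _ h1
      rw [map_smul, smul_eq_mul, abs_mul, abs_inv, abs_norm] at h2
      have h3 : ‖f x‖ = |f x| := Real.norm_eq_abs _
      rw [h3]
      have h4 : |f x| = ‖x‖ * (‖x‖⁻¹ * |f x|) := by
        field_simp
      rw [h4, mul_comm (ε/2) ‖x‖]
      exact mul_le_mul_of_nonneg_left h2 (norm_nonneg x)
  linarith

end RosMain

set_option maxHeartbeats 1000000 in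
open RosAux RosMain in
/-- Let `X` be a Banach space containing no isomorphic copy of `ℓ₁`.  If `(x*_n)` is a
sequence in `X*` which is weak*-null and satisfies `⟨x*_n, x_n⟩ → 0` for every weakly null
sequence `(x_n)` in `X`, then `‖x*_n‖ → 0`. -/
theorem norm_null_of_weakStar_null_of_no_l1
    (X : Type*) [NormedAddCommGroup X] [NormedSpace ℝ X] [CompleteSpace X]
    (hX : ¬ ∃ (J : lp (fun _ : ℕ => ℝ) 1 →L[ℝ] X) (c : ℝ),
        0 < c ∧ ∀ a : lp (fun _ : ℕ => ℝ) 1, c * ‖a‖ ≤ ‖J a‖)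
    (xs : ℕ → (X →L[ℝ] ℝ))
    (hweakStar : ∀ x : X, Tendsto (fun n => xs n x) atTop (𝓝 0))
    (hpair : ∀ x : ℕ → X,
        (∀ f : X →L[ℝ] ℝ, Tendsto (fun n => f (x n)) atTop (𝓝 0)) →
        Tendsto (fun n => xs n (x n)) atTop (𝓝 0)) :
    Tendsto (fun n => ‖xs n‖) atTop (𝓝 0) := by
  classical
  by_contra hnot
  rw [Metric.tendsto_atTop] at hnot
  push_neg at hnot
  obtain ⟨ε, hε, hfreq⟩ := hnot
  obtain ⟨nseq, hnseq, hns⟩ := extraction_of_frequently_atTop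
    (frequently_atTop.mpr (fun N => by obtain ⟨n, hn1, hn2⟩ := hfreq N; exact ⟨n, hn1, hn2⟩))
  have hbig : ∀ k, ε ≤ ‖xs (nseq k)‖ := by
    intro k
    have := hns k
    rwa [Real.dist_0_eq_abs, abs_of_nonneg (norm_nonneg _)] at this
  choose uu huu1 huu2 using fun k => exists_big (xs (nseq k)) hε (hbig k)
  obtain ⟨φ, hφ, hwc⟩ := exists_weakly_cauchy_subseq hX uu huu1
  -- construct the pairs (aⱼ, bⱼ)
  have hstep : ∀ (prev j : ℕ), ∃ ab : ℕ × ℕ, prev < ab.1 ∧ ab.1 < ab.2 ∧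
      |xs (nseq (φ ab.2)) (uu (φ ab.1))| < 1/(j+1) := by
    intro prev j
    have h0 := hweakStar (uu (φ (prev + 1)))
    rw [Metric.tendsto_atTop] at h0
    obtain ⟨M, hM⟩ := h0 (1/(j+1)) (by positivity)
    refine ⟨(prev + 1, max (prev + 2) M), Nat.lt_succ_self prev,
      lt_of_lt_of_le (Nat.lt_succ_self (prev+1)) (le_max_left _ _), ?_⟩
    have hMle : M ≤ nseq (φ (max (prev + 2) M)) :=
      le_trans (le_max_right _ _) ((hnseq.comp hφ).le_apply)
    have := hM (nseq (φ (max (prev + 2) M))) hMle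
    rwa [Real.dist_0_eq_abs] at this
  choose Fab hF1 hF2 hF3 using hstep
  set ab : ℕ → ℕ × ℕ := fun j => Nat.rec (Fab 0 0) (fun j p => Fab p.2 (j+1)) j with hab
  have habs : ∀ j, ab (j+1) = Fab (ab j).2 (j+1) := fun j => rfl
  have haltb : ∀ j, (ab j).1 < (ab j).2 := by
    intro j
    cases j with
    | zero => exact hF2 0 0
    | succ j => exact hF2 (ab j).2 (j+1)
  have hblta : ∀ j, (ab j).2 < (ab (j+1)).1 := fun j => hF1 (ab j).2 (j+1)
  have hsmall : ∀ j, |xs (nseq (φ (ab j).2)) (uu (φ (ab j).1))| < 1/(j+1) := by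
    intro j
    cases j with
    | zero => exact hF3 0 0
    | succ j => exact hF3 (ab j).2 (j+1)
  have hamono : StrictMono (fun j => (ab j).1) :=
    strictMono_nat_of_lt_succ (fun j => lt_trans (haltb j) (hblta j))
  have hbmono : StrictMono (fun j => (ab j).2) :=
    strictMono_nat_of_lt_succ (fun j => lt_trans (hblta j) (haltb (j+1)))
  set ψ : ℕ → ℕ := fun j => nseq (φ (ab j).2) with hψ
  have hψmono : StrictMono ψ := (hnseq.comp hφ).comp hbmono
  set x : ℕ → X := fun nn =>
    if h : ∃ j, ψ j = nn then uu (φ (ab h.choose).2) - uu (φ (ab h.choose).1) else 0 with hx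
  have hweaknull : ∀ f : X →L[ℝ] ℝ, Tendsto (fun nn => f (x nn)) atTop (𝓝 0) := by
    intro f
    obtain ⟨L, hL⟩ := hwc f
    rw [Metric.tendsto_atTop]
    intro δ hδ
    rw [Metric.tendsto_atTop] at hL
    obtain ⟨Jb, hJb⟩ := hL (δ/2) (by linarith)
    refine ⟨ψ Jb + 1, fun nn hnn => ?_⟩
    rw [Real.dist_0_eq_abs]
    by_cases hex : ∃ j, ψ j = nn
    · have hxnn : x nn = uu (φ (ab hex.choose).2) - uu (φ (ab hex.choose).1) := by
        rw [hx]; exact dif_pos hex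
      set j := hex.choose with hj
      have hψj : ψ j = nn := hex.choose_spec
      have hjJb : Jb < j := by
        have : ψ Jb < ψ j := by omega
        exact hψmono.lt_iff_lt.mp this
      have hja : Jb ≤ (ab j).1 := le_trans (le_of_lt hjJb) (hamono.le_apply)
      have hjb : Jb ≤ (ab j).2 := le_trans hja (le_of_lt (haltb j))
      have hda := hJb (ab j).1 hja
      have hdb := hJb (ab j).2 hjb
      rw [Real.dist_eq] at hda hdb
      rw [hxnn, map_sub]
      calc |f (uu (φ (ab j).2)) - f (uu (φ (ab j).1))|
          = |(f (uu (φ (ab j).2)) - L) - (f (uu (φ (ab j).1)) - L)| := by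
            rw [sub_sub_sub_cancel_right]
        _ ≤ |f (uu (φ (ab j).2)) - L| + |f (uu (φ (ab j).1)) - L| := abs_sub _ _
        _ < δ := by linarith
    · have hxnn : x nn = 0 := by rw [hx]; exact dif_neg hex
      rw [hxnn, map_zero, abs_zero]
      exact hδ
  have hcontra := hpair x hweaknull
  rw [Metric.tendsto_atTop] at hcontra
  obtain ⟨M, hM⟩ := hcontra (ε/4) (by linarith)
  obtain ⟨n0, hn0⟩ := exists_nat_gt (4/ε)
  set j : ℕ := max M n0 with hjdef
  have hψjM : M ≤ ψ j := le_trans (le_max_left _ _) (hψmono.le_apply)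
  have hsmallj : 1/((j:ℝ)+1) < ε/4 := by
    have h1 : (4:ℝ)/ε < (j:ℝ) + 1 := by
      have : (n0:ℝ) ≤ (j:ℝ) := by exact_mod_cast Nat.cast_le.mpr (le_max_right M n0)
      linarith
    rw [div_lt_div_iff₀ (by positivity) (by norm_num)]
    rw [div_lt_iff₀ hε] at h1
    linarith
  have hval := hM (ψ j) hψjM
  rw [Real.dist_0_eq_abs] at hval
  -- compute x (ψ j)
  have hex : ∃ j', ψ j' = ψ j := ⟨j, rfl⟩
  have hcj : hex.choose = j := hψmono.injective hex.choose_spec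
  have hxψ : x (ψ j) = uu (φ (ab j).2) - uu (φ (ab j).1) := by
    have h1 : x (ψ j) = uu (φ (ab hex.choose).2) - uu (φ (ab hex.choose).1) := by
      rw [hx]; exact dif_pos hex
    rw [hcj] at h1
    exact h1
  have hbigval : ε/2 < xs (ψ j) (uu (φ (ab j).2)) := huu2 (φ (ab j).2)
  have hsj := hsmall j
  have hcast : |xs (nseq (φ (ab j).2)) (uu (φ (ab j).1))| < ε/4 := lt_trans hsj hsmallj
  have hxval : xs (ψ j) (x (ψ j)) =
      xs (ψ j) (uu (φ (ab j).2)) - xs (ψ j) (uu (φ (ab j).1)) := by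
    rw [hxψ, map_sub]
  rw [hxval] at hval
  have habs2 := abs_lt.mp hval
  have habs3 := abs_lt.mp hcast
  have hψeq : ψ j = nseq (φ (ab j).2) := rfl
  rw [hψeq] at hbigval habs2
  linarith [habs2.2, habs3.1, habs3.2, hbigval]
end

section
/- Let X be a Banach space and let J : ℓ₁ → X be a continuous linear map that is bounded below (an isomorphic embedding), and write e_n for the image under J of the n-th unit vector of ℓ₁. Then there exists a bounded linear operator T : X → L∞[0,1] such that T(e_n) = r_n for every n, where r_n is the n-th Rademacher function. -/
open MeasureTheory Filter Topology
open scoped ENNReal InnerProductSpace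

/-- The `n`-th Rademacher function (indexed so that `rademacher n` is `r_{n+1}`,
where `r_k t = (-1) ^ ⌊2 ^ k * t⌋`). -/
noncomputable def rademacher (n : ℕ) : ℝ → ℝ := fun t => (-1 : ℝ) ^ ⌊(2 : ℝ) ^ (n + 1) * t⌋

theorem rademacher_measurable (n : ℕ) : Measurable (rademacher n) := by
  have h : Measurable fun t : ℝ => ⌊(2 : ℝ) ^ (n + 1) * t⌋ :=
    (measurable_const.mul measurable_id).floor
  exact (measurable_from_top (f := fun k : ℤ => (-1 : ℝ) ^ k)).comp h

theorem rademacher_memℒp (n : ℕ) :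
    MemLp (rademacher n) ⊤ (volume.restrict (Set.Icc (0 : ℝ) 1)) := by
  refine memLp_top_of_bound (rademacher_measurable n).aestronglyMeasurable 1 ?_
  filter_upwards with t
  simp [rademacher, norm_zpow]

lemma abs_rademacher (n : ℕ) (t : ℝ) : |rademacher n t| = 1 := by
  unfold rademacher
  rcases Int.even_or_odd ⌊(2 : ℝ) ^ (n + 1) * t⌋ with h | h
  · rw [h.neg_one_zpow]; simp
  · rw [h.neg_one_zpow]; simp

/-- The `n`-th Rademacher function as an element of `L∞[0,1]`. -/
noncomputable def rademacherLinfty (n : ℕ) :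
    Lp ℝ ⊤ (volume.restrict (Set.Icc (0 : ℝ) 1)) :=
  (rademacher_memℒp n).toLp (rademacher n)

lemma floor_intCast_floor_div_pow (x : ℝ) (d : ℕ) :
    ⌊(⌊x⌋ : ℝ) / 2 ^ d⌋ = ⌊x / 2 ^ d⌋ := by
  have hN : (0 : ℝ) < 2 ^ d := by positivity
  set m := ⌊(⌊x⌋ : ℝ) / 2 ^ d⌋ with hm
  symm
  rw [Int.floor_eq_iff]
  constructor
  · calc (m : ℝ) ≤ (⌊x⌋ : ℝ) / 2 ^ d := Int.floor_le _
    _ ≤ x / 2 ^ d := by gcongr; exact Int.floor_le x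
  · have h1 : (⌊x⌋ : ℝ) / 2 ^ d < m + 1 := Int.lt_floor_add_one _
    have h2 : (⌊x⌋ : ℝ) < 2 ^ d * (m + 1) := by
      rw [div_lt_iff₀ hN] at h1; linarith [h1]
    have h3 : (⌊x⌋ : ℝ) < ((2 ^ d * (m + 1) : ℤ) : ℝ) := by push_cast; linarith
    have h4 : ⌊x⌋ < 2 ^ d * (m + 1) := by exact_mod_cast h3
    have h5 : ⌊x⌋ + 1 ≤ 2 ^ d * (m + 1) := h4
    have h6 : x < (⌊x⌋ : ℝ) + 1 := Int.lt_floor_add_one x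
    have h7 : x < 2 ^ d * ((m : ℝ) + 1) := by
      calc x < (⌊x⌋ : ℝ) + 1 := h6
      _ ≤ ((2 ^ d * (m + 1) : ℤ) : ℝ) := by exact_mod_cast h5
      _ = 2 ^ d * ((m : ℝ) + 1) := by push_cast; ring
    rw [div_lt_iff₀ hN]; linarith

lemma rademacher_floor_eq (n k : ℕ) (h : n + 1 ≤ k) (t : ℝ) :
    rademacher n ((⌊(2 : ℝ) ^ k * t⌋ : ℝ) / 2 ^ k) = rademacher n t := by
  obtain ⟨d, rfl⟩ : ∃ d, k = (n + 1) + d := ⟨k - (n + 1), by omega⟩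
  unfold rademacher
  congr 1
  have hpow : (2 : ℝ) ^ (n + 1 + d) = 2 ^ (n + 1) * 2 ^ d := pow_add 2 (n + 1) d
  have h2 : (2 : ℝ) ^ (n + 1) * ((⌊(2 : ℝ) ^ (n + 1 + d) * t⌋ : ℝ) / 2 ^ (n + 1 + d))
      = (⌊(2 : ℝ) ^ (n + 1 + d) * t⌋ : ℝ) / 2 ^ d := by
    rw [hpow]; field_simp
  have h3 : (2 : ℝ) ^ (n + 1) * t = (2 : ℝ) ^ (n + 1 + d) * t / 2 ^ d := by
    rw [hpow]; field_simp
  rw [h2, floor_intCast_floor_div_pow, ← h3]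

lemma exists_tendsto_ultrafilter_of_bounded (U : Ultrafilter ℕ) (s : ℕ → ℝ) (M : ℝ)
    (h : ∀ k, |s k| ≤ M) : ∃ l, Tendsto s ↑U (𝓝 l) := by
  have hmem : Set.Icc (-M) M ∈ Filter.map s ↑U := by
    refine Filter.mem_map.2 (Filter.univ_mem' fun k => ?_)
    exact Set.mem_Icc.2 (abs_le.mp (h k))
  obtain ⟨l, -, hl⟩ := (isCompact_Icc (a := -M) (b := M)).ultrafilter_le_nhds (U.map s)
    (by rwa [Filter.le_principal_iff, Ultrafilter.coe_map])
  exact ⟨l, by rwa [Tendsto, ← Ultrafilter.coe_map]⟩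

lemma exists_block_functional
    (X : Type*) [NormedAddCommGroup X] [NormedSpace ℝ X]
    (J : lp (fun _ : ℕ => ℝ) 1 →L[ℝ] X) (c : ℝ) (hc : 0 < c)
    (hJ : ∀ a : lp (fun _ : ℕ => ℝ) 1, c * ‖a‖ ≤ ‖J a‖)
    (e : ℕ → X) (he : ∀ n, e n = J (lp.single 1 n (1 : ℝ)))
    (k : ℕ) (j : ℤ) :
    ∃ g : X →L[ℝ] ℝ, ‖g‖ ≤ 1 / c ∧
      ∀ n < k, g (e n) = rademacher n ((j : ℝ) / 2 ^ k) := by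
  classical
  have hinj : Function.Injective (J : lp (fun _ : ℕ => ℝ) 1 →ₗ[ℝ] X) := by
    intro a b hab
    have h1 : c * ‖a - b‖ ≤ ‖J (a - b)‖ := hJ _
    rw [map_sub] at h1
    simp only [ContinuousLinearMap.coe_coe] at hab
    rw [show J a - J b = 0 by rw [hab]; abel, norm_zero] at h1
    have : ‖a - b‖ ≤ 0 := by nlinarith [norm_nonneg (a - b)]
    have : a - b = 0 := by
      rw [← norm_le_zero_iff]; exact this
    exact sub_eq_zero.mp this
  set coef : ℕ → ℝ := fun m => rademacher m ((j : ℝ) / 2 ^ k) with hcoefdef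
  have hcoef : ∀ m, |coef m| = 1 := fun m => abs_rademacher m _
  let f₀ : lp (fun _ : ℕ => ℝ) 1 →ₗ[ℝ] ℝ :=
    { toFun := fun a => ∑ m ∈ Finset.range k, coef m * a m
      map_add' := by
        intro a b
        simp only [lp.coeFn_add, Pi.add_apply, ← Finset.sum_add_distrib]
        exact Finset.sum_congr rfl fun m _ => by ring
      map_smul' := by
        intro r a
        simp only [lp.coeFn_smul, Pi.smul_apply, smul_eq_mul, RingHom.id_apply,
          Finset.mul_sum]
        exact Finset.sum_congr rfl fun m _ => by ring }
  have hf₀ : ∀ a : lp (fun _ : ℕ => ℝ) 1, |f₀ a| ≤ ‖a‖ := by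
    intro a
    have hsum : HasSum (fun i => ‖a i‖ ^ (1 : ℝ≥0∞).toReal) (‖a‖ ^ (1 : ℝ≥0∞).toReal) :=
      lp.hasSum_norm (by norm_num) a
    simp only [ENNReal.toReal_one, Real.rpow_one] at hsum
    calc |f₀ a| = |∑ m ∈ Finset.range k, coef m * a m| := rfl
    _ ≤ ∑ m ∈ Finset.range k, |coef m * a m| := Finset.abs_sum_le_sum_abs _ _
    _ = ∑ m ∈ Finset.range k, ‖a m‖ := by
        refine Finset.sum_congr rfl fun m _ => ?_
        rw [abs_mul, hcoef m, one_mul, Real.norm_eq_abs]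
    _ ≤ ‖a‖ := sum_le_hasSum _ (fun m _ => norm_nonneg _) hsum
  set p : Submodule ℝ X := LinearMap.range (J : lp (fun _ : ℕ => ℝ) 1 →ₗ[ℝ] X) with hp
  let E := LinearEquiv.ofInjective (J : lp (fun _ : ℕ => ℝ) 1 →ₗ[ℝ] X) hinj
  let f : p →ₗ[ℝ] ℝ := f₀.comp E.symm.toLinearMap
  have hfbound : ∀ y : p, ‖f y‖ ≤ (1 / c) * ‖y‖ := by
    intro y
    set a := E.symm y with ha
    have hya : (y : X) = J a := by
      have := congrArg (Subtype.val) (E.apply_symm_apply y)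
      rw [← this]
      exact (LinearEquiv.ofInjective_apply (h := hinj) _ (E.symm y)).symm
    have h1 : ‖f y‖ = |f₀ a| := by
      simp only [f, LinearMap.comp_apply, LinearEquiv.coe_toLinearMap, ← ha, Real.norm_eq_abs]
    have h2 : c * ‖a‖ ≤ ‖(y : X)‖ := by rw [hya]; exact hJ a
    have h3 : ‖a‖ ≤ (1 / c) * ‖y‖ := by
      rw [div_mul_eq_mul_div, le_div_iff₀ hc]
      calc ‖a‖ * c = c * ‖a‖ := by ring
      _ ≤ ‖(y : X)‖ := h2
      _ = 1 * ‖y‖ := by rw [one_mul]; rfl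
    calc ‖f y‖ = |f₀ a| := h1
    _ ≤ ‖a‖ := hf₀ a
    _ ≤ (1 / c) * ‖y‖ := h3
  let fc : p →L[ℝ] ℝ := f.mkContinuous (1 / c) hfbound
  obtain ⟨g, hg1, hg2⟩ := exists_extension_norm_eq p fc
  refine ⟨g, ?_, ?_⟩
  · rw [hg2]
    exact LinearMap.mkContinuous_norm_le f (by positivity) hfbound
  · intro n hn
    have hmem : e n ∈ p := by
      rw [he n]; exact ⟨lp.single 1 n (1 : ℝ), rfl⟩
    have h1 : g (e n) = fc ⟨e n, hmem⟩ := hg1 ⟨e n, hmem⟩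
    have h2 : E.symm ⟨e n, hmem⟩ = lp.single 1 n (1 : ℝ) := by
      have : E (lp.single 1 n (1 : ℝ)) = ⟨e n, hmem⟩ := by
        apply Subtype.ext
        show ((E (lp.single 1 n (1 : ℝ)) : X)) = e n
        rw [LinearEquiv.ofInjective_apply, he n]; rfl
      rw [← this, E.symm_apply_apply]
    have h3 : fc ⟨e n, hmem⟩ = f₀ (lp.single 1 n (1 : ℝ)) := by
      show f ⟨e n, hmem⟩ = _
      simp only [f, LinearMap.comp_apply, LinearEquiv.coe_toLinearMap, h2]
    rw [h1, h3]
    have h4 : f₀ (lp.single 1 n (1 : ℝ))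
        = ∑ m ∈ Finset.range k,
            coef m * ((lp.single 1 n (1 : ℝ) : lp (fun _ : ℕ => ℝ) 1) : ∀ _ : ℕ, ℝ) m := rfl
    rw [h4, Finset.sum_eq_single n]
    · rw [lp.single_apply_self, mul_one]
    · intro m _ hm
      rw [lp.single_apply_ne _ _ _ hm, mul_zero]
    · intro hnk
      exact absurd (Finset.mem_range.mpr hn) hnk

set_option maxHeartbeats 1000000 in
/-- **Injectivity of `L∞[0,1]`.**  If `J : ℓ₁ → X` is a continuous linear map bounded
below, with `e n = J (δ n)` the images of the unit vectors, then the operator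
`δ n ↦ r_n` from `ℓ₁` into `L∞[0,1]` extends through `J`: there is a bounded linear
operator `T : X → L∞[0,1]` with `T (e n) = r_n` for every `n`. -/
theorem exists_extension_to_Linfty_mapping_unitVectors_to_rademacher
    (X : Type*) [NormedAddCommGroup X] [NormedSpace ℝ X] [CompleteSpace X]
    (J : lp (fun _ : ℕ => ℝ) 1 →L[ℝ] X) (c : ℝ) (hc : 0 < c)
    (hJ : ∀ a : lp (fun _ : ℕ => ℝ) 1, c * ‖a‖ ≤ ‖J a‖)
    (e : ℕ → X) (he : ∀ n, e n = J (lp.single 1 n (1 : ℝ))) :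
    ∃ T : X →L[ℝ] Lp ℝ ⊤ (volume.restrict (Set.Icc (0 : ℝ) 1)),
      ∀ n, T (e n) = rademacherLinfty n := by
  classical
  set μ : Measure ℝ := volume.restrict (Set.Icc (0 : ℝ) 1) with hμ
  haveI : IsFiniteMeasure μ := by
    constructor
    rw [hμ, Measure.restrict_apply_univ, Real.volume_Icc]
    norm_num
  -- block functionals
  choose Ψ hΨnorm hΨe using fun (k : ℕ) (j : ℤ) =>
    exists_block_functional X J c hc hJ e he k j
  -- dyadic approximants
  set G : ℕ → X → ℝ → ℝ := fun k x t => Ψ k ⌊(2 : ℝ) ^ k * t⌋ x with hG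
  have hGmeas : ∀ k x, Measurable (G k x) := by
    intro k x
    have h : Measurable fun t : ℝ => ⌊(2 : ℝ) ^ k * t⌋ :=
      (measurable_const.mul measurable_id).floor
    exact (measurable_from_top (f := fun j : ℤ => Ψ k j x)).comp h
  have hGbound : ∀ k x t, |G k x t| ≤ (1 / c) * ‖x‖ := by
    intro k x t
    calc |G k x t| = ‖Ψ k ⌊(2 : ℝ) ^ k * t⌋ x‖ := (Real.norm_eq_abs _).symm
    _ ≤ ‖Ψ k ⌊(2 : ℝ) ^ k * t⌋‖ * ‖x‖ := ContinuousLinearMap.le_opNorm _ _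
    _ ≤ (1 / c) * ‖x‖ := by
        gcongr
        exact hΨnorm _ _
  have hGrad : ∀ n k, n + 1 ≤ k → G k (e n) = rademacher n := by
    intro n k hk
    funext t
    rw [hG]
    show Ψ k ⌊(2 : ℝ) ^ k * t⌋ (e n) = rademacher n t
    rw [hΨe k ⌊(2 : ℝ) ^ k * t⌋ n (by omega), rademacher_floor_eq n k hk]
  have hGadd : ∀ k x x', G k (x + x') = G k x + G k x' := by
    intro k x x'
    funext t
    simp [hG, map_add]
  have hGsmul : ∀ (k : ℕ) (r : ℝ) (x : X), G k (r • x) = r • G k x := by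
    intro k r x
    funext t
    simp [hG, _root_.map_smul]
  have hGtop : ∀ k x, MemLp (G k x) ⊤ μ := by
    intro k x
    refine memLp_top_of_bound (hGmeas k x).aestronglyMeasurable ((1 / c) * ‖x‖) ?_
    filter_upwards with t
    rw [Real.norm_eq_abs]; exact hGbound k x t
  have hG2 : ∀ k x, MemLp (G k x) 2 μ := fun k x => (hGtop k x).mono_exponent le_top
  set F : ℕ → X → Lp ℝ 2 μ := fun k x => (hG2 k x).toLp (G k x) with hF
  have hμuniv : measureUnivNNReal μ = 1 := by
    rw [measureUnivNNReal, hμ, Measure.restrict_apply_univ, Real.volume_Icc]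
    norm_num
  have hFnorm : ∀ k x, ‖F k x‖ ≤ (1 / c) * ‖x‖ := by
    intro k x
    have hb : ∀ᵐ t ∂μ, ‖(F k x : ℝ → ℝ) t‖ ≤ (1 / c) * ‖x‖ := by
      filter_upwards [(hG2 k x).coeFn_toLp] with t ht
      rw [ht, Real.norm_eq_abs]
      exact hGbound k x t
    have := Lp.norm_le_of_ae_bound (by positivity : (0:ℝ) ≤ (1 / c) * ‖x‖) hb
    rwa [hμuniv, NNReal.coe_one, Real.one_rpow, one_mul] at this
  -- ultrafilter
  set U : Ultrafilter ℕ := Ultrafilter.of atTop with hU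
  have hUle : (U : Filter ℕ) ≤ atTop := Ultrafilter.of_le _
  -- the weak limit functional
  set Λ : X → Lp ℝ 2 μ → ℝ := fun x g => limUnder ↑U (fun k => ⟪F k x, g⟫_ℝ) with hΛdef
  have hinnerb : ∀ x g k, |⟪F k x, g⟫_ℝ| ≤ (1 / c) * ‖x‖ * ‖g‖ := by
    intro x g k
    calc |⟪F k x, g⟫_ℝ| ≤ ‖F k x‖ * ‖g‖ := abs_real_inner_le_norm _ _
    _ ≤ (1 / c) * ‖x‖ * ‖g‖ := by gcongr; exact hFnorm k x
  have hΛ : ∀ x g, Tendsto (fun k => ⟪F k x, g⟫_ℝ) ↑U (𝓝 (Λ x g)) := by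
    intro x g
    obtain ⟨l, hl⟩ := exists_tendsto_ultrafilter_of_bounded U _ ((1 / c) * ‖x‖ * ‖g‖)
      (hinnerb x g)
    rw [hΛdef]
    simpa only [hl.limUnder_eq] using hl
  have hΛbound : ∀ x g, |Λ x g| ≤ (1 / c) * ‖x‖ * ‖g‖ := by
    intro x g
    exact le_of_tendsto' (hΛ x g).abs fun k => hinnerb x g k
  -- bundle as a continuous functional on L², get the representing element
  set φ : X → (Lp ℝ 2 μ) →L[ℝ] ℝ := fun x =>
    LinearMap.mkContinuous
      { toFun := Λ x
        map_add' := fun g g' => by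
          refine tendsto_nhds_unique (hΛ x (g + g')) ?_
          have : (fun k => ⟪F k x, g + g'⟫_ℝ)
              = fun k => ⟪F k x, g⟫_ℝ + ⟪F k x, g'⟫_ℝ := by
            funext k; rw [inner_add_right]
          rw [this]
          exact ((hΛ x g).add (hΛ x g'))
        map_smul' := fun r g => by
          refine tendsto_nhds_unique (hΛ x (r • g)) ?_
          have : (fun k => ⟪F k x, r • g⟫_ℝ) = fun k => r * ⟪F k x, g⟫_ℝ := by
            funext k; rw [real_inner_smul_right]
          rw [this]
          simpa using ((hΛ x g).const_mul r) }
      ((1 / c) * ‖x‖)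
      (fun g => by
        rw [Real.norm_eq_abs]
        exact hΛbound x g) with hφdef
  have hφ : ∀ x g, φ x g = Λ x g := fun x g => rfl
  set y : X → Lp ℝ 2 μ := fun x => (InnerProductSpace.toDual ℝ (Lp ℝ 2 μ)).symm (φ x) with hy
  have hyg : ∀ x g, ⟪y x, g⟫_ℝ = Λ x g := by
    intro x g
    rw [hy]
    exact InnerProductSpace.toDual_symm_apply
  -- e n is mapped to the Rademacher function
  have hrad2 : ∀ n, MemLp (rademacher n) 2 μ :=
    fun n => (rademacher_memℒp n).mono_exponent le_top
  have hFe : ∀ n k, n + 1 ≤ k → F k (e n) = (hrad2 n).toLp (rademacher n) := by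
    intro n k hk
    exact MemLp.toLp_congr _ _ (Filter.EventuallyEq.of_eq (hGrad n k hk))
  have hye : ∀ n, y (e n) = (hrad2 n).toLp (rademacher n) := by
    intro n
    refine ext_inner_right ℝ fun g => ?_
    rw [hyg]
    have hev : (fun k => ⟪F k (e n), g⟫_ℝ)
        =ᶠ[↑U] fun _ => ⟪(hrad2 n).toLp (rademacher n), g⟫_ℝ := by
      refine Filter.Eventually.filter_mono hUle ?_
      filter_upwards [Filter.eventually_ge_atTop (n + 1)] with k hk
      rw [hFe n k hk]
    have : Tendsto (fun k => ⟪F k (e n), g⟫_ℝ) ↑U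
        (𝓝 (⟪(hrad2 n).toLp (rademacher n), g⟫_ℝ)) :=
      Tendsto.congr' hev.symm tendsto_const_nhds
    exact tendsto_nhds_unique (hΛ (e n) g) this
  -- a.e. bound on y x
  have hyb : ∀ x, ∀ᵐ t ∂μ, |(y x : ℝ → ℝ) t| ≤ (1 / c) * ‖x‖ := by
    intro x
    set R := (1 / c) * ‖x‖ with hR
    have hR0 : 0 ≤ R := by positivity
    have hint : Integrable (y x : ℝ → ℝ) μ :=
      memLp_one_iff_integrable.mp ((Lp.memLp (y x)).mono_exponent (by norm_num))
    have hsets : ∀ s, MeasurableSet s → μ s ≠ ∞ →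
        |∫ t in s, (y x : ℝ → ℝ) t ∂μ| ≤ R * (μ s).toReal := by
      intro s hs hμs
      have h1 : ∫ t in s, (y x : ℝ → ℝ) t ∂μ
          = ⟪indicatorConstLp 2 hs hμs (1 : ℝ), y x⟫_ℝ :=
        (L2.inner_indicatorConstLp_one hs hμs (y x)).symm
      rw [h1, real_inner_comm, hyg]
      refine le_of_tendsto' (hΛ x _).abs fun k => ?_
      have h2 : ⟪F k x, indicatorConstLp 2 hs hμs (1 : ℝ)⟫_ℝ
          = ∫ t in s, (F k x : ℝ → ℝ) t ∂μ := by
        rw [real_inner_comm]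
        exact L2.inner_indicatorConstLp_one hs hμs (F k x)
      have h3 : ∫ t in s, (F k x : ℝ → ℝ) t ∂μ = ∫ t in s, G k x t ∂μ :=
        integral_congr_ae (ae_restrict_of_ae ((hG2 k x).coeFn_toLp))
      rw [h2, h3]
      have h4 : ‖∫ t in s, G k x t ∂μ‖ ≤ R * (μ s).toReal := by
        refine norm_setIntegral_le_of_norm_le_const (lt_top_iff_ne_top.mpr hμs) ?_
        intro t _
        rw [Real.norm_eq_abs]
        exact hGbound k x t
      rwa [Real.norm_eq_abs] at h4
    have hup : ∀ᵐ t ∂μ, (y x : ℝ → ℝ) t ≤ R := by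
      have h0 : 0 ≤ᵐ[μ] fun t => R - (y x : ℝ → ℝ) t := by
        refine ae_nonneg_of_forall_setIntegral_nonneg ((integrable_const R).sub hint) ?_
        intro s hs hμs
        rw [integral_sub (integrableOn_const (C := R) hμs.ne) hint.integrableOn,
          setIntegral_const, smul_eq_mul, measureReal_def]
        have := (abs_le.mp (hsets s hs hμs.ne)).2
        linarith [this]
      filter_upwards [h0] with t ht
      simpa using ht
    have hlo : ∀ᵐ t ∂μ, -R ≤ (y x : ℝ → ℝ) t := by
      have h0 : 0 ≤ᵐ[μ] fun t => (y x : ℝ → ℝ) t + R := by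
        refine ae_nonneg_of_forall_setIntegral_nonneg (hint.add (integrable_const R)) ?_
        intro s hs hμs
        rw [integral_add hint.integrableOn (integrableOn_const (C := R) hμs.ne),
          setIntegral_const, smul_eq_mul, measureReal_def]
        have := (abs_le.mp (hsets s hs hμs.ne)).1
        linarith [this]
      filter_upwards [h0] with t ht
      simp only [Pi.zero_apply, Pi.add_apply] at ht
      linarith
    filter_upwards [hup, hlo] with t h1 h2
    rw [abs_le]; exact ⟨h2, h1⟩
  have hymem : ∀ x, MemLp (y x : ℝ → ℝ) ⊤ μ := by
    intro x
    refine memLp_top_of_bound (Lp.aestronglyMeasurable (y x)) ((1 / c) * ‖x‖) ?_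
    filter_upwards [hyb x] with t ht
    rwa [Real.norm_eq_abs]
  -- linearity of y
  have hyadd : ∀ x x', y (x + x') = y x + y x' := by
    intro x x'
    have hφadd : φ (x + x') = φ x + φ x' := by
      refine ContinuousLinearMap.ext fun g => ?_
      show Λ (x + x') g = Λ x g + Λ x' g
      refine tendsto_nhds_unique (hΛ (x + x') g) ?_
      have hFad : ∀ k, F k (x + x') = F k x + F k x' := by
        intro k
        rw [hF]
        show (hG2 k (x + x')).toLp (G k (x + x')) = _
        rw [MemLp.toLp_congr (hG2 k (x + x')) ((hG2 k x).add (hG2 k x'))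
          (Filter.EventuallyEq.of_eq (hGadd k x x'))]
        exact MemLp.toLp_add _ _
      have : (fun k => ⟪F k (x + x'), g⟫_ℝ)
          = fun k => ⟪F k x, g⟫_ℝ + ⟪F k x', g⟫_ℝ := by
        funext k; rw [hFad k, inner_add_left]
      rw [this]
      exact (hΛ x g).add (hΛ x' g)
    rw [hy]
    show (InnerProductSpace.toDual ℝ (Lp ℝ 2 μ)).symm (φ (x + x')) = _
    rw [hφadd, map_add]
  have hysmul : ∀ (r : ℝ) x, y (r • x) = r • y x := by
    intro r x
    have hφsmul : φ (r • x) = r • φ x := by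
      refine ContinuousLinearMap.ext fun g => ?_
      show Λ (r • x) g = r * Λ x g
      refine tendsto_nhds_unique (hΛ (r • x) g) ?_
      have hFsm : ∀ k, F k (r • x) = r • F k x := by
        intro k
        rw [hF]
        show (hG2 k (r • x)).toLp (G k (r • x)) = _
        rw [MemLp.toLp_congr (hG2 k (r • x)) ((hG2 k x).const_smul r)
          (Filter.EventuallyEq.of_eq (hGsmul k r x))]
        exact MemLp.toLp_const_smul r _
      have : (fun k => ⟪F k (r • x), g⟫_ℝ) = fun k => r * ⟪F k x, g⟫_ℝ := by
        funext k; rw [hFsm k, real_inner_smul_left]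
      rw [this]
      simpa using (hΛ x g).const_mul r
    rw [hy]
    show (InnerProductSpace.toDual ℝ (Lp ℝ 2 μ)).symm (φ (r • x)) = _
    rw [hφsmul]
    simp
  -- the operator into L∞
  set T₀ : X → Lp ℝ ⊤ μ := fun x => (hymem x).toLp (y x : ℝ → ℝ) with hT₀
  have hT₀add : ∀ x x', T₀ (x + x') = T₀ x + T₀ x' := by
    intro x x'
    rw [hT₀]
    show (hymem (x + x')).toLp _ = _
    rw [MemLp.toLp_congr (hymem (x + x')) ((hymem x).add (hymem x'))
      (by rw [hyadd x x']; exact Lp.coeFn_add (y x) (y x'))]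
    exact MemLp.toLp_add _ _
  have hT₀smul : ∀ (r : ℝ) x, T₀ (r • x) = r • T₀ x := by
    intro r x
    rw [hT₀]
    show (hymem (r • x)).toLp _ = _
    rw [MemLp.toLp_congr (hymem (r • x)) ((hymem x).const_smul r)
      (by rw [hysmul r x]; exact Lp.coeFn_smul r (y x))]
    exact MemLp.toLp_const_smul r _
  have hT₀norm : ∀ x, ‖T₀ x‖ ≤ (1 / c) * ‖x‖ := by
    intro x
    have hb : ∀ᵐ t ∂μ, ‖(T₀ x : ℝ → ℝ) t‖ ≤ (1 / c) * ‖x‖ := by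
      filter_upwards [(hymem x).coeFn_toLp, hyb x] with t h1 h2
      rw [h1, Real.norm_eq_abs]
      exact h2
    have := Lp.norm_le_of_ae_bound (by positivity : (0:ℝ) ≤ (1 / c) * ‖x‖) hb
    rwa [hμuniv, NNReal.coe_one, Real.one_rpow, one_mul] at this
  refine ⟨LinearMap.mkContinuous
    { toFun := T₀
      map_add' := hT₀add
      map_smul' := hT₀smul } ((1 / c)) (fun x => hT₀norm x), ?_⟩
  intro n
  show T₀ (e n) = rademacherLinfty n
  rw [hT₀, rademacherLinfty]
  refine MemLp.toLp_congr _ _ ?_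
  rw [hye n]
  exact (hrad2 n).coeFn_toLp
end
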